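/- For all integers q ≥ p ≥ 2 there exists a constant c > 0 (depending only on p and q) such that every graph on n vertices that contains no copy of the complete bipartite graph K_{p,q} as a subgraph has an independent set of size at least c · n^{1/p}. -/

import Mathlib

open SimpleGraph

/-- `G.ContainsCopy H` means the graph `G` contains a subgraph isomorphic to `H`,
i.e. there is an injective graph homomorphism from `H` into `G`. -/
def SimpleGraph.ContainsCopy {α β : Type*} (G : SimpleGraph α) (H : SimpleGraph β) : Prop :=
  ∃ f : H →g G, Function.Injective f

/-- `RamseyProp n H G` : every graph `Γ` on `n` vertices contains a copy of `H`,
or its complement contains a copy of `G`. -/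
def RamseyProp {α β : Type*} (n : ℕ) (H : SimpleGraph α) (G : SimpleGraph β) : Prop :=
  ∀ Γ : SimpleGraph (Fin n), Γ.ContainsCopy H ∨ Γᶜ.ContainsCopy G

/-- The Ramsey number `r(H, G)` : the least positive `n` such that every graph on `n`
vertices contains a copy of `H` or its complement contains a copy of `G`. -/
noncomputable def ramseyNumber {α β : Type*} (H : SimpleGraph α) (G : SimpleGraph β) : ℕ :=
  sInf {n : ℕ | 0 < n ∧ RamseyProp n H G}

/-- Greedy bound: if all degrees are at most `D`, there is an independent set `S`
with `card V ≤ |S| * (D+1)`. -/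
lemma greedy {V : Type} [Fintype V] [DecidableEq V] (G : SimpleGraph V) [DecidableRel G.Adj]
    (D : ℕ) (h : ∀ v, G.degree v ≤ D) :
    ∃ S : Finset V, Gᶜ.IsClique (S : Set V) ∧ Fintype.card V ≤ S.card * (D + 1) := by
  classical
  set F := Finset.univ.filter (fun S : Finset V => Gᶜ.IsClique (S : Set V)) with hF
  have hne : F.Nonempty := ⟨∅, by simp [hF, Set.Pairwise]⟩
  obtain ⟨S, hSF, hSmax⟩ := F.exists_max_image (fun S => S.card) hne
  have hS : Gᶜ.IsClique (S : Set V) := by simpa [hF] using hSF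
  refine ⟨S, hS, ?_⟩
  have hcover : ∀ v : V, v ∈ S.biUnion (fun s => insert s (G.neighborFinset s)) := by
    intro v
    by_cases hv : v ∈ S
    · exact Finset.mem_biUnion.2 ⟨v, hv, Finset.mem_insert_self _ _⟩
    · by_contra hmem
      -- then `insert v S` is independent, contradicting maximality
      have hindep : Gᶜ.IsClique ((insert v S : Finset V) : Set V) := by
        rw [Finset.coe_insert]
        refine hS.insert ?_
        intro b hb hbv
        rw [compl_adj]
        refine ⟨hbv, fun hadj => ?_⟩
        exact hmem (Finset.mem_biUnion.2 ⟨b, hb, Finset.mem_insert.2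
          (Or.inr (by rwa [mem_neighborFinset, adj_comm]))⟩)
      have hmemF : insert v S ∈ F := Finset.mem_filter.2 ⟨Finset.mem_univ _, hindep⟩
      have := hSmax _ hmemF
      rw [Finset.card_insert_of_notMem hv] at this
      omega
  calc Fintype.card V = Finset.univ.card := (Finset.card_univ (α := V)).symm
    _ ≤ (S.biUnion (fun s => insert s (G.neighborFinset s))).card :=
        Finset.card_le_card (fun x _ => hcover x)
    _ ≤ ∑ s ∈ S, (insert s (G.neighborFinset s)).card := Finset.card_biUnion_le
    _ ≤ ∑ s ∈ S, (D + 1) := by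
        refine Finset.sum_le_sum fun s _ => ?_
        calc (insert s (G.neighborFinset s)).card ≤ (G.neighborFinset s).card + 1 :=
              Finset.card_insert_le _ _
          _ ≤ D + 1 := by have := h s; rw [card_neighborFinset_eq_degree]; omega
    _ = S.card * (D + 1) := by rw [Finset.sum_const, smul_eq_mul]

/-- If the graph induced on the neighborhood of `v` contains `K_{p,q}`, then `G`
contains `K_{p+1,q}` (add `v` to the left side). -/
lemma extend_copy {p q : ℕ} {V : Type} (G : SimpleGraph V) (v : V)
    (h : (G.induce (G.neighborSet v)).ContainsCopy (completeBipartiteGraph (Fin p) (Fin q))) :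
    G.ContainsCopy (completeBipartiteGraph (Fin (p + 1)) (Fin q)) := by
  obtain ⟨f, hf⟩ := h
  set g : Fin (p + 1) ⊕ Fin q → V :=
    Sum.elim (Fin.cons v (fun i => (f (Sum.inl i) : V))) (fun j => (f (Sum.inr j) : V)) with hg
  have hg0 : g (Sum.inl 0) = v := by simp [hg]
  have hgs : ∀ i0 : Fin p, g (Sum.inl i0.succ) = (f (Sum.inl i0) : V) := by
    intro i0; simp [hg]
  have hgr : ∀ j : Fin q, g (Sum.inr j) = (f (Sum.inr j) : V) := by intro j; simp [hg]
  have hvnot : ∀ x, (f x : V) ≠ v := by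
    intro x hx
    have hmem := (f x).2
    rw [hx] at hmem
    exact G.irrefl hmem
  have key : ∀ (i : Fin (p+1)) (j : Fin q), G.Adj (g (Sum.inl i)) (g (Sum.inr j)) := by
    intro i j
    induction i using Fin.cases with
    | zero => rw [hg0, hgr]; exact (f (Sum.inr j)).2
    | succ i0 =>
        rw [hgs, hgr]
        exact f.map_adj (show (completeBipartiteGraph (Fin p) (Fin q)).Adj
          (Sum.inl i0) (Sum.inr j) by simp)
  have hmap : ∀ a b, (completeBipartiteGraph (Fin (p+1)) (Fin q)).Adj a b → G.Adj (g a) (g b) := by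
    rintro (i | j) (i' | j') hadj
    · simp at hadj
    · exact key i j'
    · exact (key i' j).symm
    · simp at hadj
  have hginj : Function.Injective g := by
    rintro (i | j) (i' | j') h
    · induction i using Fin.cases with
      | zero =>
          induction i' using Fin.cases with
          | zero => rfl
          | succ i0' => rw [hg0, hgs] at h; exact absurd h.symm (hvnot _)
      | succ i0 =>
          induction i' using Fin.cases with
          | zero => rw [hg0, hgs] at h; exact absurd h (hvnot _)
          | succ i0' =>
              rw [hgs, hgs] at h
              have := hf (Subtype.ext h)
              simp only [Sum.inl.injEq] at this
              rw [this]
    · induction i using Fin.cases with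
      | zero => rw [hg0, hgr] at h; exact absurd h.symm (hvnot _)
      | succ i0 =>
          rw [hgs, hgr] at h
          exact absurd (hf (Subtype.ext h)) (by simp)
    · induction i' using Fin.cases with
      | zero => rw [hg0, hgr] at h; exact absurd h (hvnot _)
      | succ i0 =>
          rw [hgs, hgr] at h
          exact absurd (hf (Subtype.ext h.symm)) (by simp)
    · rw [hgr, hgr] at h
      have := hf (Subtype.ext h)
      simpa using this
  exact ⟨⟨g, fun {a b} => hmap a b⟩, hginj⟩

/-- Any graph with at least `q` vertices contains the edgeless `K_{0,q}`. -/
lemma copy_zero {q : ℕ} {W : Type} [Fintype W] (G : SimpleGraph W) (hq : q ≤ Fintype.card W) :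
    G.ContainsCopy (completeBipartiteGraph (Fin 0) (Fin q)) := by
  obtain ⟨e⟩ := Function.Embedding.nonempty_of_card_le (α := Fin q) (β := W) (by simpa using hq)
  refine ⟨⟨Sum.elim (fun i => i.elim0) (fun j => e j), ?_⟩, ?_⟩
  · rintro (i | j) (i' | j') hadj
    · exact i.elim0
    · exact i.elim0
    · exact i'.elim0
    · simp at hadj
  · rintro (i | j) (i' | j') h
    · exact i.elim0
    · exact i.elim0
    · exact i'.elim0
    · exact congrArg Sum.inr (e.injective (show e j = e j' from h))

lemma indep_of_free (q : ℕ) (hq : 1 ≤ q) :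
    ∀ p : ℕ, 1 ≤ p → ∃ c : ℝ, 0 < c ∧
      ∀ (V : Type) [Fintype V] (G : SimpleGraph V),
        ¬ G.ContainsCopy (completeBipartiteGraph (Fin p) (Fin q)) →
        ∃ S : Finset V, Gᶜ.IsClique (S : Set V) ∧
          c * (Fintype.card V : ℝ) ^ ((1 : ℝ) / p) ≤ S.card := by
  intro p hp1
  induction p, hp1 using Nat.le_induction with
  | base =>
      refine ⟨1 / q, by positivity, ?_⟩
      intro V _ G hfree
      classical
      have hdeg : ∀ v : V, G.degree v ≤ q - 1 := by
        intro v
        by_contra hv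
        have hv' : q ≤ G.degree v := by omega
        have hcard : q ≤ Fintype.card ↥(G.neighborSet v) := by
          rwa [G.card_neighborSet_eq_degree]
        exact hfree (extend_copy G v (copy_zero _ hcard))
      obtain ⟨S, hS, hcard⟩ := greedy G (q - 1) hdeg
      refine ⟨S, hS, ?_⟩
      have hq' : q - 1 + 1 = q := by omega
      rw [hq'] at hcard
      have : (Fintype.card V : ℝ) ≤ (S.card : ℝ) * q := by exact_mod_cast hcard
      rw [Nat.cast_one, div_one, Real.rpow_one]
      rw [div_mul_eq_mul_div, div_le_iff₀ (by positivity)]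
      linarith [this]
  | succ p hp IH =>
      obtain ⟨c', hc', hIH⟩ := IH
      refine ⟨min c' (1 / 2), by positivity, ?_⟩
      intro V _ G hfree
      classical
      simp only [Nat.cast_add, Nat.cast_one]
      set n := Fintype.card V with hn
      set t : ℝ := (n : ℝ) ^ ((p : ℝ) / (p + 1)) with ht
      have htnn : 0 ≤ t := Real.rpow_nonneg (by positivity) _
      have hexp : (p : ℝ) / (p + 1) * (1 / p) = 1 / (p + 1) := by
        have hp0 : (p : ℝ) ≠ 0 := by positivity
        field_simp
      by_cases hbig : ∃ v : V, t ≤ (G.degree v : ℝ)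
      · obtain ⟨v, hv⟩ := hbig
        have hfree' : ¬ (G.induce (G.neighborSet v)).ContainsCopy
            (completeBipartiteGraph (Fin p) (Fin q)) :=
          fun h => hfree (extend_copy G v h)
        obtain ⟨S', hS', hcard'⟩ := hIH _ (G.induce (G.neighborSet v)) hfree'
        refine ⟨S'.image Subtype.val, ?_, ?_⟩
        · intro a ha b hb hab
          simp only [Finset.coe_image, Set.mem_image, Finset.mem_coe] at ha hb
          obtain ⟨a', ha', rfl⟩ := ha
          obtain ⟨b', hb', rfl⟩ := hb
          have hab' : a' ≠ b' := fun h => hab (by rw [h])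
          have := hS' ha' hb' hab'
          rw [compl_adj] at this ⊢
          exact ⟨hab, fun hadj => this.2 hadj⟩
        · rw [Finset.card_image_of_injective _ Subtype.val_injective]
          have hNt : t ≤ (Fintype.card ↥(G.neighborSet v) : ℝ) := by
            rwa [G.card_neighborSet_eq_degree]
          calc min c' (1 / 2) * (n : ℝ) ^ ((1 : ℝ) / (p + 1))
              ≤ c' * (n : ℝ) ^ ((1 : ℝ) / (p + 1)) := by
                apply mul_le_mul_of_nonneg_right (min_le_left _ _)
                positivity
            _ = c' * t ^ ((1 : ℝ) / p) := by
                rw [ht, ← Real.rpow_mul (by positivity), hexp]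
            _ ≤ c' * (Fintype.card ↥(G.neighborSet v) : ℝ) ^ ((1 : ℝ) / p) := by
                apply mul_le_mul_of_nonneg_left _ hc'.le
                exact Real.rpow_le_rpow htnn hNt (by positivity)
            _ ≤ S'.card := hcard'
      · push_neg at hbig
        rcases Nat.eq_zero_or_pos n with hn0 | hn1
        · refine ⟨∅, by simp, ?_⟩
          rw [hn0, Nat.cast_zero,
            Real.zero_rpow (show (1:ℝ)/((p:ℝ)+1) ≠ 0 by positivity)]
          simp
        · have hD : ∀ v : V, G.degree v ≤ ⌊t⌋₊ := fun v => Nat.le_floor (hbig v).le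
          obtain ⟨S, hS, hcard⟩ := greedy G ⌊t⌋₊ hD
          refine ⟨S, hS, ?_⟩
          have ht1 : 1 ≤ t := Real.one_le_rpow (by exact_mod_cast hn1) (by positivity)
          have hfl : (⌊t⌋₊ : ℝ) + 1 ≤ 2 * t := by
            have := Nat.floor_le htnn
            linarith
          have hc : (n : ℝ) ≤ (S.card : ℝ) * (2 * t) := by
            have h1 : (n : ℝ) ≤ (S.card : ℝ) * ((⌊t⌋₊ : ℝ) + 1) := by exact_mod_cast hcard
            have : (S.card : ℝ) * ((⌊t⌋₊ : ℝ) + 1) ≤ (S.card : ℝ) * (2 * t) :=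
              mul_le_mul_of_nonneg_left hfl (by positivity)
            linarith
          have htpos : 0 < t := lt_of_lt_of_le one_pos ht1
          have hrw : (n : ℝ) / (2 * t) = (1 / 2) * (n : ℝ) ^ ((1 : ℝ) / (p + 1)) := by
            have hnpos : (0:ℝ) < n := by exact_mod_cast hn1
            have h1 : (n:ℝ) / t = (n:ℝ) ^ ((1:ℝ) - (p:ℝ)/(p+1)) := by
              rw [ht, Real.rpow_sub hnpos, Real.rpow_one]
            have h2 : (1:ℝ) - (p:ℝ)/(p+1) = 1/((p:ℝ)+1) := by
              have : (p:ℝ) + 1 ≠ 0 := by positivity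
              field_simp
              ring
            rw [show (n:ℝ)/(2*t) = (1/2) * ((n:ℝ)/t) by ring, h1, h2]
          calc min c' (1 / 2) * (n : ℝ) ^ ((1 : ℝ) / (p + 1))
              ≤ (1 / 2) * (n : ℝ) ^ ((1 : ℝ) / (p + 1)) := by
                apply mul_le_mul_of_nonneg_right (min_le_right _ _)
                positivity
            _ = (n : ℝ) / (2 * t) := hrw.symm
            _ ≤ S.card := by
                rw [div_le_iff₀ (by positivity)]
                linarith

theorem stmt_11 (p q : ℕ) (hp : 2 ≤ p) (hpq : p ≤ q) :
    ∃ c : ℝ, 0 < c ∧ ∀ (n : ℕ) (Γ : SimpleGraph (Fin n)),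
      ¬ Γ.ContainsCopy (completeBipartiteGraph (Fin p) (Fin q)) →
      ∃ S : Finset (Fin n), Γᶜ.IsClique (S : Set (Fin n)) ∧
        c * (n : ℝ) ^ ((1 : ℝ) / p) ≤ S.card := by
  obtain ⟨c, hc, h⟩ := indep_of_free q (by omega) p (by omega)
  refine ⟨c, hc, fun n Γ hfree => ?_⟩
  obtain ⟨S, hS, hcard⟩ := h (Fin n) Γ hfree
  exact ⟨S, hS, by simpa using hcard⟩
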